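/- Let b₀ > 0, and for each n let η_n = η / sqrt(b₀² + ∑_{k=1}^{n-1} ‖g_k‖²) where g_k are random vectors satisfying E[∑_{k=1}^{n-1} ‖g_k - G_k‖²] ≤ (n-1)σ² and ‖G_k‖² ≤ 2M δ_k with δ_k ≥ 0. Then E[1/η_n] ≤ (1/η)( sqrt(b₀² + 2(n-1)σ²) + 2 sqrt(M) E[sqrt(∑_{k=1}^{n} δ_k)] ). -/

import Mathlib

open MeasureTheory Finset in
private lemma sqrt_add_le' (a b : ℝ) (ha : 0 ≤ a) (hb : 0 ≤ b) :
    Real.sqrt (a + b) ≤ Real.sqrt a + Real.sqrt b := by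
  have h := Real.sqrt_le_sqrt (show a + b ≤ (Real.sqrt a + Real.sqrt b) ^ 2 by
    nlinarith [Real.sq_sqrt ha, Real.sq_sqrt hb, Real.sqrt_nonneg a, Real.sqrt_nonneg b,
      mul_nonneg (Real.sqrt_nonneg a) (Real.sqrt_nonneg b)])
  rwa [Real.sqrt_sq (by positivity)] at h

open MeasureTheory in
/-- Bound on the expected reciprocal AdaGrad step size (inequality (23)):
`E[1/η_n] ≤ (1/η)(√(b₀² + 2(n-1)σ²) + 2√M E[√(∑_{k=1}^n δ_k)])`. -/
theorem stmt_13
    {Ω : Type*} [MeasurableSpace Ω] (μ : Measure Ω) [IsProbabilityMeasure μ]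
    {H : Type*} [NormedAddCommGroup H] [InnerProductSpace ℝ H]
    (g G : ℕ → Ω → H) (δ : ℕ → Ω → ℝ)
    (η b0 M σ2 : ℝ) (hη : 0 < η) (hb0 : 0 < b0) (hM : 0 < M) (hσ2 : 0 < σ2)
    (n : ℕ) (hn : 1 ≤ n)
    (hδ0 : ∀ k ω, 0 ≤ δ k ω)
    (hvarint : Integrable (fun ω => ∑ k ∈ Finset.range (n - 1), ‖g k ω - G k ω‖ ^ 2) μ)
    (hvar : ∫ ω, (∑ k ∈ Finset.range (n - 1), ‖g k ω - G k ω‖ ^ 2) ∂μ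
      ≤ (n - 1 : ℝ) * σ2)
    (hG : ∀ k ω, ‖G k ω‖ ^ 2 ≤ 2 * M * δ k ω)
    (hint1 : Integrable
      (fun ω => (1 / η) * Real.sqrt (b0 ^ 2 + ∑ k ∈ Finset.range (n - 1), ‖g k ω‖ ^ 2)) μ)
    (hint2 : Integrable (fun ω => Real.sqrt (∑ k ∈ Finset.range n, δ k ω)) μ) :
    ∫ ω, (1 / η) * Real.sqrt (b0 ^ 2 + ∑ k ∈ Finset.range (n - 1), ‖g k ω‖ ^ 2) ∂μ
      ≤ (1 / η) * (Real.sqrt (b0 ^ 2 + 2 * (n - 1 : ℝ) * σ2)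
          + 2 * Real.sqrt M * ∫ ω, Real.sqrt (∑ k ∈ Finset.range n, δ k ω) ∂μ) := by
  set c : ℝ := b0 ^ 2 + 2 * (n - 1 : ℝ) * σ2 with hcdef
  have hn1 : (0 : ℝ) ≤ (n - 1 : ℝ) := by
    have : (1 : ℝ) ≤ n := by exact_mod_cast hn
    linarith
  have hcpos : 0 < c := by nlinarith [sq_nonneg b0, mul_nonneg hn1 hσ2.le]
  set X : Ω → ℝ := fun ω => b0 ^ 2 + 2 * ∑ k ∈ Finset.range (n - 1), ‖g k ω - G k ω‖ ^ 2
    with hXdef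
  have hXint : Integrable X μ := (integrable_const (b0 ^ 2)).add (hvarint.const_mul 2)
  have hX0 : ∀ ω, 0 ≤ X ω := by
    intro ω
    have : (0 : ℝ) ≤ ∑ k ∈ Finset.range (n - 1), ‖g k ω - G k ω‖ ^ 2 :=
      Finset.sum_nonneg fun k _ => sq_nonneg _
    positivity
  have hXintegral : ∫ ω, X ω ∂μ ≤ c := by
    rw [hXdef]
    rw [integral_add (integrable_const _) (hvarint.const_mul 2), integral_const,
      integral_const_mul]
    simp only [measure_univ, probReal_univ, ENNReal.toReal_one, smul_eq_mul, one_mul]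
    nlinarith [hvar]
  -- integrability of sqrt ∘ X
  have hsqrtXint : Integrable (fun ω => Real.sqrt (X ω)) μ := by
    refine (hXint.add (integrable_const 1)).mono
      (Real.continuous_sqrt.comp_aestronglyMeasurable hXint.aestronglyMeasurable) ?_
    filter_upwards with ω
    have h0 := hX0 ω
    have hs := Real.sq_sqrt h0
    have hsn := Real.sqrt_nonneg (X ω)
    rw [Real.norm_eq_abs, Real.norm_eq_abs, abs_of_nonneg hsn]
    have : Real.sqrt (X ω) ≤ X ω + 1 := by nlinarith
    exact this.trans (le_abs_self _)
  -- pointwise bound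
  have hpt : ∀ ω, (1 / η) * Real.sqrt (b0 ^ 2 + ∑ k ∈ Finset.range (n - 1), ‖g k ω‖ ^ 2)
      ≤ (1 / η) * (Real.sqrt (X ω)
        + 2 * Real.sqrt M * Real.sqrt (∑ k ∈ Finset.range n, δ k ω)) := by
    intro ω
    have hηinv : (0 : ℝ) ≤ 1 / η := by positivity
    refine mul_le_mul_of_nonneg_left ?_ hηinv
    have hsum1 : ∑ k ∈ Finset.range (n - 1), ‖g k ω‖ ^ 2
        ≤ 2 * ∑ k ∈ Finset.range (n - 1), ‖g k ω - G k ω‖ ^ 2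
          + 4 * M * ∑ k ∈ Finset.range (n - 1), δ k ω := by
      have : ∀ k, ‖g k ω‖ ^ 2 ≤ 2 * ‖g k ω - G k ω‖ ^ 2 + 4 * M * δ k ω := by
        intro k
        have h1 : ‖g k ω‖ ≤ ‖g k ω - G k ω‖ + ‖G k ω‖ := by
          simpa using norm_add_le (g k ω - G k ω) (G k ω)
        have h2 := hG k ω
        nlinarith [norm_nonneg (g k ω), norm_nonneg (g k ω - G k ω), norm_nonneg (G k ω),
          sq_nonneg (‖g k ω - G k ω‖ - ‖G k ω‖)]
      calc ∑ k ∈ Finset.range (n - 1), ‖g k ω‖ ^ 2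
          ≤ ∑ k ∈ Finset.range (n - 1), (2 * ‖g k ω - G k ω‖ ^ 2 + 4 * M * δ k ω) :=
            Finset.sum_le_sum fun k _ => this k
        _ = _ := by rw [Finset.sum_add_distrib, ← Finset.mul_sum, ← Finset.mul_sum]
    have hsum2 : ∑ k ∈ Finset.range (n - 1), δ k ω ≤ ∑ k ∈ Finset.range n, δ k ω :=
      Finset.sum_le_sum_of_subset_of_nonneg
        (Finset.range_subset_range.2 (Nat.sub_le n 1)) (fun k _ _ => hδ0 k ω)
    have hδn : (0 : ℝ) ≤ ∑ k ∈ Finset.range n, δ k ω :=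
      Finset.sum_nonneg fun k _ => hδ0 k ω
    have hbig : b0 ^ 2 + ∑ k ∈ Finset.range (n - 1), ‖g k ω‖ ^ 2
        ≤ X ω + 4 * M * ∑ k ∈ Finset.range n, δ k ω := by
      rw [hXdef]; dsimp only
      nlinarith [hsum1, hsum2]
    calc Real.sqrt (b0 ^ 2 + ∑ k ∈ Finset.range (n - 1), ‖g k ω‖ ^ 2)
        ≤ Real.sqrt (X ω + 4 * M * ∑ k ∈ Finset.range n, δ k ω) := Real.sqrt_le_sqrt hbig
      _ ≤ Real.sqrt (X ω) + Real.sqrt (4 * M * ∑ k ∈ Finset.range n, δ k ω) :=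
            sqrt_add_le' _ _ (hX0 ω) (by positivity)
      _ = Real.sqrt (X ω) + 2 * Real.sqrt M * Real.sqrt (∑ k ∈ Finset.range n, δ k ω) := by
            rw [show (4 : ℝ) * M * ∑ k ∈ Finset.range n, δ k ω
                = (2 : ℝ) ^ 2 * (M * ∑ k ∈ Finset.range n, δ k ω) by ring,
              Real.sqrt_mul (by positivity), Real.sqrt_sq (by norm_num),
              Real.sqrt_mul hM.le]
            ring
  -- integrability of RHS integrand
  have hRHSint : Integrable (fun ω => (1 / η) * (Real.sqrt (X ω)
      + 2 * Real.sqrt M * Real.sqrt (∑ k ∈ Finset.range n, δ k ω))) μ :=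
    ((hsqrtXint.add (hint2.const_mul _)).const_mul _)
  have hmono := integral_mono hint1 hRHSint hpt
  refine hmono.trans ?_
  rw [integral_const_mul, integral_add hsqrtXint (hint2.const_mul _), integral_const_mul]
  have hsqrtX : ∫ ω, Real.sqrt (X ω) ∂μ ≤ Real.sqrt c := by
    have hscpos : 0 < Real.sqrt c := Real.sqrt_pos.2 hcpos
    have hpt2 : ∀ ω, Real.sqrt (X ω) ≤ (X ω + c) / (2 * Real.sqrt c) := by
      intro ω
      rw [le_div_iff₀ (by positivity)]
      nlinarith [sq_nonneg (Real.sqrt (X ω) - Real.sqrt c), Real.sq_sqrt (hX0 ω),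
        Real.sq_sqrt hcpos.le, Real.sqrt_nonneg (X ω)]
    have h1 : ∫ ω, Real.sqrt (X ω) ∂μ ≤ ∫ ω, (X ω + c) / (2 * Real.sqrt c) ∂μ :=
      integral_mono hsqrtXint ((hXint.add (integrable_const c)).div_const _) hpt2
    have h2 : ∫ ω, (X ω + c) / (2 * Real.sqrt c) ∂μ
        = ((∫ ω, X ω ∂μ) + c) / (2 * Real.sqrt c) := by
      rw [integral_div, integral_add hXint (integrable_const c), integral_const]
      simp [measure_univ]
    rw [h2] at h1
    refine h1.trans ?_
    rw [div_le_iff₀ (by positivity)]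
    nlinarith [Real.sq_sqrt hcpos.le, hXintegral]
  have hηinv : (0 : ℝ) ≤ 1 / η := by positivity
  exact mul_le_mul_of_nonneg_left (by linarith) hηinv
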